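/- For every graph G that is not a forest, no extreme point of the indegree polytope P_ρ(G) minimizes ∑_{v∈V} φ(ρ(v)) over integer points of P_ρ(G) for a strictly convex function φ; equivalently, if G contains a cycle, then for any acyclic orientation there exists a (possibly cyclic) orientation with strictly smaller value of ∑_{v∈V} φ(ρ(v)) for every discrete strictly convex φ. -/

import Mathlib

open Finset

/-- A finite loop-free multigraph: edges indexed by `E`, each with two distinct endpoints. -/
structure Multigraph (V E : Type) where
  fst : E → V
  snd : E → V
  loopless : ∀ e, fst e ≠ snd e

namespace Multigraph

variable {V E : Type} [Fintype V] [DecidableEq V] [Fintype E] [DecidableEq E]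

/-- Head of edge `e` under orientation `o`. -/
def head (G : Multigraph V E) (o : E → Bool) (e : E) : V :=
  if o e then G.fst e else G.snd e

/-- Tail of edge `e` under orientation `o`. -/
def tail (G : Multigraph V E) (o : E → Bool) (e : E) : V :=
  if o e then G.snd e else G.fst e

/-- Indegree of `v` under orientation `o`. -/
def indeg (G : Multigraph V E) (o : E → Bool) (v : V) : ℕ :=
  (Finset.univ.filter (fun e => G.head o e = v)).card

/-- The orientation `o` contains a directed cycle (a closed directed trail). -/
def HasDicycle (G : Multigraph V E) (o : E → Bool) : Prop :=
  ∃ k : ℕ, ∃ hk : 0 < k, ∃ f : Fin k → E, Function.Injective f ∧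
    ∀ i : Fin k, G.head o (f i) = G.tail o (f ⟨(i.val + 1) % k, Nat.mod_lt _ hk⟩)

/-- The orientation `o` is acyclic. -/
def Acyclic (G : Multigraph V E) (o : E → Bool) : Prop := ¬ G.HasDicycle o

/-- Left-degree of `v` in the vertex ordering `σ`. -/
def leftDeg (G : Multigraph V E) (σ : V ≃ Fin (Fintype.card V)) (v : V) : ℕ :=
  (Finset.univ.filter (fun e =>
    (G.fst e = v ∧ σ (G.snd e) < σ v) ∨ (G.snd e = v ∧ σ (G.fst e) < σ v))).card

/-- Right-degree of `v` in the vertex ordering `σ`. -/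
def rightDeg (G : Multigraph V E) (σ : V ≃ Fin (Fintype.card V)) (v : V) : ℕ :=
  (Finset.univ.filter (fun e =>
    (G.fst e = v ∧ σ v < σ (G.snd e)) ∨ (G.snd e = v ∧ σ v < σ (G.fst e)))).card

/-- Degree of `v` in the subgraph induced by `S`. -/
def degIn (G : Multigraph V E) (S : Finset V) (v : V) : ℕ :=
  (Finset.univ.filter (fun e =>
    (G.fst e = v ∨ G.snd e = v) ∧ G.fst e ∈ S ∧ G.snd e ∈ S)).card

/-- Degree of `v` in `G`. -/
def deg (G : Multigraph V E) (v : V) : ℕ :=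
  (Finset.univ.filter (fun e => G.fst e = v ∨ G.snd e = v)).card

/-- The set of vertices appearing at or before `v` in the ordering `σ`. -/
def prefixSet (σ : V ≃ Fin (Fintype.card V)) (v : V) : Finset V :=
  Finset.univ.filter (fun u => σ u ≤ σ v)

end Multigraph

open Multigraph

variable {V E : Type} [Fintype V] [DecidableEq V] [Fintype E] [DecidableEq E]

set_option linter.unusedSectionVars false

lemma phi_convex (φ : ℕ → ℝ) (hφ : ∀ z : ℕ, 1 ≤ z → 2 * φ z < φ (z + 1) + φ (z - 1))
    {a b : ℕ} (hab : a + 2 ≤ b) : φ (a + 1) + φ (b - 1) < φ a + φ b := by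
  have hd : StrictMono (fun z : ℕ => φ (z + 1) - φ z) := by
    apply strictMono_nat_of_lt_succ
    intro n
    have h := hφ (n + 1) (by omega)
    simp only [Nat.add_sub_cancel] at h
    show φ (n + 1) - φ n < φ (n + 1 + 1) - φ (n + 1)
    linarith
  have h1 : a < b - 1 := by omega
  have h2 := hd h1
  dsimp only at h2
  have hb : b - 1 + 1 = b := by omega
  rw [hb] at h2
  linarith

lemma hasDicycle_of_chain (G : Multigraph V E) (o : E → Bool) (w : ℕ → E)
    (hw : ∀ n, G.head o (w n) = G.tail o (w (n + 1))) : G.HasDicycle o := by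
  classical
  have hex : ∃ m, ∃ n, n < m ∧ w n = w m := by
    obtain ⟨a, b, hab, heq⟩ := Finite.exists_ne_map_eq_of_infinite w
    rcases lt_or_gt_of_ne hab with h | h
    · exact ⟨b, a, h, heq⟩
    · exact ⟨a, b, h, heq.symm⟩
  set m := Nat.find hex with hm
  obtain ⟨n, hnm, hw0⟩ := Nat.find_spec hex
  set k := m - n with hk
  have hkpos : 0 < k := by omega
  refine ⟨k, hkpos, fun i => w (n + i.val), ?_, ?_⟩
  · intro i j hij
    rcases lt_trichotomy i.val j.val with h | h | h
    · have hjm : n + j.val < m := by have := j.isLt; omega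
      exact absurd ⟨n + i.val, by omega, hij⟩ (Nat.find_min hex hjm)
    · exact Fin.ext h
    · have him : n + i.val < m := by have := i.isLt; omega
      exact absurd ⟨n + j.val, by omega, hij.symm⟩ (Nat.find_min hex him)
  · intro i
    by_cases hi : i.val + 1 < k
    · have hmod : (i.val + 1) % k = i.val + 1 := Nat.mod_eq_of_lt hi
      simp only [hmod]
      exact hw (n + i.val)
    · have hieq : i.val + 1 = k := by have := i.isLt; omega
      have hmod : (i.val + 1) % k = 0 := by rw [hieq, Nat.mod_self]
      simp only [hmod]
      have h1 := hw (n + i.val)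
      have h2 : n + i.val + 1 = m := by omega
      rw [h2, ← hw0] at h1
      simpa using h1

lemma hasDicycle_of_backward_chain (G : Multigraph V E) (o : E → Bool) (w : ℕ → E)
    (hw : ∀ n, G.tail o (w n) = G.head o (w (n + 1))) : G.HasDicycle o := by
  classical
  have hex : ∃ m, ∃ n, n < m ∧ w n = w m := by
    obtain ⟨a, b, hab, heq⟩ := Finite.exists_ne_map_eq_of_infinite w
    rcases lt_or_gt_of_ne hab with h | h
    · exact ⟨b, a, h, heq⟩
    · exact ⟨a, b, h, heq.symm⟩
  set m := Nat.find hex with hm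
  obtain ⟨n, hnm, hw0⟩ := Nat.find_spec hex
  set k := m - n with hk
  have hkpos : 0 < k := by omega
  refine ⟨k, hkpos, fun i => w (n + (k - 1 - i.val)), ?_, ?_⟩
  · intro i j hij
    rcases lt_trichotomy i.val j.val with h | h | h
    · have him : n + (k - 1 - i.val) < m := by have := i.isLt; have := j.isLt; omega
      refine absurd ⟨n + (k - 1 - j.val), by have := j.isLt; omega, ?_⟩ (Nat.find_min hex him)
      exact hij.symm
    · exact Fin.ext h
    · have hjm : n + (k - 1 - j.val) < m := by have := i.isLt; have := j.isLt; omega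
      refine absurd ⟨n + (k - 1 - i.val), by have := i.isLt; omega, ?_⟩ (Nat.find_min hex hjm)
      exact hij
  · intro i
    by_cases hi : i.val + 1 < k
    · have hmod : (i.val + 1) % k = i.val + 1 := Nat.mod_eq_of_lt hi
      simp only [hmod]
      have e1 : n + (k - 1 - i.val) = (n + (k - 1 - (i.val + 1))) + 1 := by omega
      rw [e1, ← hw]
    · have hieq : i.val + 1 = k := by have := i.isLt; omega
      have hmod : (i.val + 1) % k = 0 := by rw [hieq, Nat.mod_self]
      simp only [hmod]
      have e1 : k - 1 - i.val = 0 := by omega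
      rw [e1]
      have h1 := hw (n + (k - 1 - 0))
      have h2 : n + (k - 1 - 0) + 1 = m := by omega
      rw [h2, ← hw0] at h1
      simpa using h1.symm

/-- A directed walk: list of edges, with matching heads/tails. -/
def GWalk (G : Multigraph V E) (o : E → Bool) : List E → V → V → Prop
  | [], u, v => u = v
  | e :: l, u, v => G.tail o e = u ∧ GWalk G o l (G.head o e) v

lemma gwalk_append (G : Multigraph V E) (o : E → Bool) {l₁ l₂ : List E} {u v : V} :
    GWalk G o (l₁ ++ l₂) u v ↔ ∃ x, GWalk G o l₁ u x ∧ GWalk G o l₂ x v := by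
  induction l₁ generalizing u with
  | nil =>
    simp only [List.nil_append, GWalk]
    exact ⟨fun h => ⟨u, rfl, h⟩, fun ⟨x, hx, h⟩ => hx ▸ h⟩
  | cons e t ih =>
    simp only [List.cons_append, GWalk, List.append_eq, ih]
    tauto

lemma gwalk_shorten (G : Multigraph V E) (o : E → Bool) {l : List E} {u v : V}
    (hw : GWalk G o l u v) (hnd : ¬ l.Nodup) :
    ∃ l', l'.length < l.length ∧ GWalk G o l' u v := by
  induction l generalizing u with
  | nil => simp at hnd
  | cons e t ih =>
    obtain ⟨he, hwt⟩ := hw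
    by_cases hm : e ∈ t
    · obtain ⟨s, t₂, rfl⟩ := List.append_of_mem hm
      obtain ⟨x, _, hx2⟩ := (gwalk_append G o).mp hwt
      refine ⟨e :: t₂, by simp [List.length_append], he, hx2.2⟩
    · have hnd' : ¬ t.Nodup := by
        simp only [List.nodup_cons] at hnd; tauto
      obtain ⟨t', ht1, ht2⟩ := ih hwt hnd'
      exact ⟨e :: t', by simpa using Nat.succ_lt_succ ht1, he, ht2⟩

lemma gwalk_nodup (G : Multigraph V E) (o : E → Bool) :
    ∀ (n : ℕ) {l : List E} {u v : V}, l.length ≤ n → GWalk G o l u v →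
      ∃ l', l'.Nodup ∧ GWalk G o l' u v := by
  intro n
  induction n with
  | zero =>
    intro l u v hl hw
    have hl0 : l = [] := List.length_eq_zero_iff.mp (Nat.le_zero.mp hl)
    subst hl0
    exact ⟨[], List.nodup_nil, hw⟩
  | succ n ih =>
    intro l u v hl hw
    by_cases hnd : l.Nodup
    · exact ⟨l, hnd, hw⟩
    · obtain ⟨l', h1, h2⟩ := gwalk_shorten G o hw hnd
      exact ih (by omega) h2

lemma gwalk_count (G : Multigraph V E) (o : E → Bool) {l : List E} {u v : V}
    (hw : GWalk G o l u v) (x : V) :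
    (l.map (G.tail o)).count x + (if v = x then 1 else 0)
      = (l.map (G.head o)).count x + (if u = x then 1 else 0) := by
  induction l generalizing u with
  | nil => rw [show u = v from hw]; simp
  | cons e t ih =>
    obtain ⟨he, hwt⟩ := hw
    have hih := ih hwt
    simp only [List.map_cons, List.count_cons, beq_iff_eq, he] at *
    omega

lemma count_map_nodup {l : List E} (hnd : l.Nodup) (g : E → V) (x : V) :
    (l.map g).count x = (l.toFinset.filter (fun e => g e = x)).card := by
  induction l with
  | nil => simp
  | cons e t ih =>
    obtain ⟨hm, hnd'⟩ := List.nodup_cons.mp hnd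
    have hms : e ∉ t.toFinset.filter (fun e => g e = x) := by
      simp only [Finset.mem_filter, List.mem_toFinset]; tauto
    simp only [List.map_cons, List.count_cons, beq_iff_eq, List.toFinset_cons,
      Finset.filter_insert, ih hnd']
    by_cases hg : g e = x
    · rw [if_pos hg, if_pos hg, Finset.card_insert_of_notMem hms]
    · rw [if_neg hg, if_neg hg, Nat.add_zero]

lemma filter_toFinset_eq (l : List E) (p : E → Prop) [DecidablePred p] :
    l.toFinset.filter p = Finset.univ.filter (fun e => e ∈ l ∧ p e) := by
  ext e
  simp [List.mem_toFinset]

lemma indeg_flip (G : Multigraph V E) (o : E → Bool) (l : List E) (x : V) :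
    G.indeg (fun e => if e ∈ l then !(o e) else o e) x
      + (Finset.univ.filter (fun e => e ∈ l ∧ G.head o e = x)).card
    = G.indeg o x + (Finset.univ.filter (fun e => e ∈ l ∧ G.tail o e = x)).card := by
  simp only [Multigraph.indeg, Finset.card_filter]
  rw [← Finset.sum_add_distrib, ← Finset.sum_add_distrib]
  apply Finset.sum_congr rfl
  intro e _
  by_cases hm : e ∈ l
  · have h1 : G.head (fun e' => if e' ∈ l then !(o e') else o e') e = G.tail o e := by
      simp only [Multigraph.head, Multigraph.tail, hm, if_true]
      cases o e <;> simp
    rw [h1]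
    simp only [hm, true_and]
    omega
  · have h1 : G.head (fun e' => if e' ∈ l then !(o e') else o e') e = G.head o e := by
      simp only [Multigraph.head, hm, if_false]
    rw [h1]
    simp only [hm, false_and, if_false]

lemma flip_indeg_spec (G : Multigraph V E) (o : E → Bool) {l : List E} {u v : V}
    (hnd : l.Nodup) (hw : GWalk G o l u v) (huv : u ≠ v) :
    G.indeg (fun e => if e ∈ l then !(o e) else o e) u = G.indeg o u + 1 ∧
    (G.indeg (fun e => if e ∈ l then !(o e) else o e) v) + 1 = G.indeg o v ∧
    ∀ x, x ≠ u → x ≠ v → G.indeg (fun e => if e ∈ l then !(o e) else o e) x = G.indeg o x := by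
  have key : ∀ x, G.indeg (fun e => if e ∈ l then !(o e) else o e) x
      + (l.map (G.head o)).count x = G.indeg o x + (l.map (G.tail o)).count x := by
    intro x
    rw [count_map_nodup hnd, count_map_nodup hnd, filter_toFinset_eq, filter_toFinset_eq]
    exact indeg_flip G o l x
  refine ⟨?_, ?_, ?_⟩
  · have hc := gwalk_count G o hw u
    rw [if_neg (Ne.symm huv), if_pos rfl] at hc
    have hk := key u
    omega
  · have hc := gwalk_count G o hw v
    rw [if_pos rfl, if_neg huv] at hc
    have hk := key v
    omega
  · intro x hxu hxv
    have hc := gwalk_count G o hw x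
    rw [if_neg (Ne.symm hxv), if_neg (Ne.symm hxu)] at hc
    have hk := key x
    omega
lemma sum_flip_lt (φ : ℕ → ℝ) (hφ : ∀ z : ℕ, 1 ≤ z → 2 * φ z < φ (z + 1) + φ (z - 1))
    (ρ ρ' : V → ℕ) (u v : V) (huv : u ≠ v)
    (h1 : ρ' u = ρ u + 1) (h2 : ρ' v + 1 = ρ v) (h3 : ∀ x, x ≠ u → x ≠ v → ρ' x = ρ x)
    (hconv : ρ u + 2 ≤ ρ v) :
    ∑ x : V, φ (ρ' x) < ∑ x : V, φ (ρ x) := by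
  have hsub : ({u, v} : Finset V) ⊆ Finset.univ := Finset.subset_univ _
  rw [← Finset.sum_sdiff hsub, ← Finset.sum_sdiff hsub]
  have heq : ∑ x ∈ Finset.univ \ {u, v}, φ (ρ' x) = ∑ x ∈ Finset.univ \ {u, v}, φ (ρ x) := by
    apply Finset.sum_congr rfl
    intro x hx
    simp only [Finset.mem_sdiff, Finset.mem_insert, Finset.mem_singleton, not_or] at hx
    rw [h3 x hx.2.1 hx.2.2]
  have hpair : ∑ x ∈ ({u, v} : Finset V), φ (ρ' x) < ∑ x ∈ ({u, v} : Finset V), φ (ρ x) := by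
    rw [Finset.sum_pair huv, Finset.sum_pair huv]
    have hv1 : ρ' v = ρ v - 1 := by omega
    rw [h1, hv1]
    exact phi_convex φ hφ hconv
  linarith

lemma hasDicycle_of_in_edges (G : Multigraph V E) (o : E → Bool) (S : Set V)
    (hne : ∃ v, v ∈ S) (h : ∀ u ∈ S, ∃ e, G.head o e = u ∧ G.tail o e ∈ S) :
    G.HasDicycle o := by
  obtain ⟨v0, hv0⟩ := hne
  choose F h1 h2 using h
  let step : {x // x ∈ S} → {x // x ∈ S} := fun p => ⟨G.tail o (F p.1 p.2), h2 p.1 p.2⟩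
  let seq : ℕ → {x // x ∈ S} := fun n => step^[n] ⟨v0, hv0⟩
  apply hasDicycle_of_backward_chain G o (fun n => F (seq n).1 (seq n).2)
  intro n
  have hs : seq (n + 1) = step (seq n) := Function.iterate_succ_apply' step n _
  rw [h1 ((seq (n + 1)).1) ((seq (n + 1)).2), hs]

lemma exists_indeg_two (G : Multigraph V E) {o₀ o : E → Bool}
    (hc : G.HasDicycle o₀) (ho : G.Acyclic o) : ∃ v, 2 ≤ G.indeg o v := by
  by_contra hno
  push_neg at hno
  obtain ⟨k, hk, f, hfinj, hfc⟩ := hc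
  obtain ⟨n, rfl⟩ : ∃ n, k = n + 1 := ⟨k - 1, by omega⟩
  set T : Finset E := Finset.univ.image f with hT
  have hrot : ∀ i : Fin (n + 1), G.head o₀ (f i) = G.tail o₀ (f (i + 1)) := by
    intro i
    have hv : ((i + 1 : Fin (n + 1)) : ℕ) = (i.val + 1) % (n + 1) := by
      rw [Fin.val_add, Fin.val_one', Nat.add_mod_mod]
    have h2 : (⟨(i.val + 1) % (n + 1), Nat.mod_lt _ hk⟩ : Fin (n + 1)) = i + 1 :=
      Fin.ext (by rw [hv])
    rw [← h2]
    exact hfc i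
  have himg : ∀ (p : E → Prop) [DecidablePred p], (T.filter p).card
      = ((Finset.univ : Finset (Fin (n + 1))).filter (fun i => p (f i))).card := by
    intro p _
    rw [hT, Finset.filter_image, Finset.card_image_of_injective _ hfinj]
  have hCD : ∀ v, (T.filter fun e => G.head o₀ e = v).card
      = (T.filter fun e => G.tail o₀ e = v).card := by
    intro v
    rw [himg, himg]
    apply Finset.card_bij (fun i _ => i + 1)
    · intro i hi
      simp only [Finset.mem_filter, Finset.mem_univ, true_and] at *
      rw [← hrot i]
      exact hi
    · intro i _ j _ hij
      exact add_right_cancel hij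
    · intro j hj
      simp only [Finset.mem_filter, Finset.mem_univ, true_and] at *
      refine ⟨j - 1, ?_, ?_⟩
      · rw [hrot (j - 1), sub_add_cancel]
        exact hj
      · rw [sub_add_cancel]
  have hhalf : ∀ (oo : E → Bool) (v : V), (T.filter fun e => G.head oo e = v).card
      + (T.filter fun e => G.tail oo e = v).card
      = (T.filter fun e => G.fst e = v).card + (T.filter fun e => G.snd e = v).card := by
    intro oo v
    simp only [Finset.card_filter]
    rw [← Finset.sum_add_distrib, ← Finset.sum_add_distrib]
    apply Finset.sum_congr rfl
    intro e _
    cases hoe : oo e <;> simp only [Multigraph.head, Multigraph.tail, hoe, if_true, if_false,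
      Bool.false_eq_true] <;> omega
  have hbal : ∀ v, (T.filter fun e => G.head o e = v).card
      + (T.filter fun e => G.tail o e = v).card
      = 2 * (T.filter fun e => G.head o₀ e = v).card := by
    intro v
    have := hhalf o v
    have := hhalf o₀ v
    have := hCD v
    omega
  have hA1 : ∀ v, (T.filter fun e => G.head o e = v).card ≤ 1 := by
    intro v
    have hsub : (T.filter fun e => G.head o e = v)
        ⊆ (Finset.univ.filter fun e => G.head o e = v) :=
      Finset.filter_subset_filter _ (Finset.subset_univ T)
    have := Finset.card_le_card hsub
    have := hno v
    simp only [Multigraph.indeg] at *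
    omega
  have hout : ∀ e ∈ T, ∃ e', e' ∈ T ∧ G.tail o e' = G.head o e := by
    intro e he
    have hA : 1 ≤ (T.filter fun e' => G.head o e' = G.head o e).card :=
      Finset.card_pos.mpr ⟨e, Finset.mem_filter.mpr ⟨he, rfl⟩⟩
    have h2 := hbal (G.head o e)
    have h3 := hA1 (G.head o e)
    have hB : 0 < (T.filter fun e' => G.tail o e' = G.head o e).card := by omega
    obtain ⟨e', he'⟩ := Finset.card_pos.mp hB
    exact ⟨e', (Finset.mem_filter.mp he').1, (Finset.mem_filter.mp he').2⟩
  have hT0 : f ⟨0, hk⟩ ∈ T := Finset.mem_image_of_mem f (Finset.mem_univ _)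
  choose nxt hnxt1 hnxt2 using hout
  let step : {e // e ∈ T} → {e // e ∈ T} := fun p => ⟨nxt p.1 p.2, hnxt1 p.1 p.2⟩
  let seq : ℕ → {e // e ∈ T} := fun m => step^[m] ⟨f ⟨0, hk⟩, hT0⟩
  apply ho
  apply hasDicycle_of_chain G o (fun m => (seq m).1)
  intro m
  have hs : seq (m + 1) = step (seq m) := Function.iterate_succ_apply' step m _
  rw [hs]
  exact (hnxt2 (seq m).1 (seq m).2).symm

/-- If `G` contains a cycle then no acyclic orientation minimizes
`∑ φ(ρ(v))` for a discrete strictly convex `φ`. -/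
theorem acyclic_not_optimal_of_cycle (G : Multigraph V E)
    (hcyc : ∃ o : E → Bool, G.HasDicycle o)
    (φ : ℕ → ℝ) (hφ : ∀ z : ℕ, 1 ≤ z → 2 * φ z < φ (z + 1) + φ (z - 1))
    (o : E → Bool) (ho : G.Acyclic o) :
    ∃ o' : E → Bool, ∑ v : V, φ (G.indeg o' v) < ∑ v : V, φ (G.indeg o v) := by
  classical
  by_contra hno
  push_neg at hno
  obtain ⟨o₀, hc⟩ := hcyc
  obtain ⟨vt, hvt⟩ := exists_indeg_two G hc ho
  set S : Set V := {u | ∃ l, GWalk G o l u vt} with hS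
  have hvtS : vt ∈ S := ⟨[], rfl⟩
  have hstep : ∀ u ∈ S, ∃ e, G.head o e = u ∧ G.tail o e ∈ S := by
    intro u hu
    have h1 : 1 ≤ G.indeg o u := by
      by_contra h0
      have h00 : G.indeg o u = 0 := by omega
      have hune : u ≠ vt := by
        intro h
        rw [h] at h00
        omega
      obtain ⟨l, hl⟩ := hu
      obtain ⟨l', hnd, hw'⟩ := gwalk_nodup G o l.length (le_refl _) hl
      obtain ⟨hs1, hs2, hs3⟩ := flip_indeg_spec G o hnd hw' hune
      have hlt := sum_flip_lt φ hφ (G.indeg o)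
        (G.indeg (fun e => if e ∈ l' then !(o e) else o e)) u vt hune hs1 hs2 hs3 (by omega)
      exact absurd (hno _) (not_le.mpr hlt)
    have hpos : (Finset.univ.filter fun e => G.head o e = u).Nonempty := by
      apply Finset.card_pos.mp
      simp only [Multigraph.indeg] at h1
      omega
    obtain ⟨e, he⟩ := hpos
    have heu : G.head o e = u := (Finset.mem_filter.mp he).2
    refine ⟨e, heu, ?_⟩
    obtain ⟨l, hl⟩ := hu
    refine ⟨e :: l, rfl, ?_⟩
    rw [heu]
    exact hl
  exact ho (hasDicycle_of_in_edges G o S ⟨vt, hvtS⟩ hstep)
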